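/- arXiv:2207.07692 — 5 statements merged into one kernel-verified Lean document; each statement's English description precedes it below -/
import Mathlib

section
/- Let X ⊆ ℝⁿ be a set, d ∈ ℕ, and suppose X is bi-Lipschitz homeomorphic at infinity to a set A ⊆ ℝᵐ whose d-dimensional Hausdorff measure has polynomial growth of order d, i.e. there is C > 0 with H^d(A ∩ closedBall(0, t)) ≤ C·t^d for all t > 0. If moreover H^d(X ∩ K₀) < ∞ for the excluded compact set K₀ ⊆ ℝⁿ, then there is a constant R > 0 such that H^d(X ∩ closedBall(0, r)) ≤ R·r^d for all r ≥ 1. -/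
open MeasureTheory
open scoped NNReal ENNReal

/-- If `X` is bi-Lipschitz homeomorphic at infinity to a set `A` whose `d`-dimensional
Hausdorff measure grows polynomially of order `d`, and `H^d(X ∩ K₀) < ∞`, then the
`d`-dimensional Hausdorff measure of `X` grows polynomially of order `d`. -/
theorem hausdorff_growth_biLip_at_infty (n m d : ℕ)
    (X : Set (EuclideanSpace ℝ (Fin n))) (A : Set (EuclideanSpace ℝ (Fin m)))
    (K₀ : Set (EuclideanSpace ℝ (Fin n))) (K' : Set (EuclideanSpace ℝ (Fin m)))
    (hK₀ : IsCompact K₀) (hK' : IsCompact K')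
    (φ : EuclideanSpace ℝ (Fin m) → EuclideanSpace ℝ (Fin n)) (l : ℝ) (hl : 1 ≤ l)
    (hbij : Set.BijOn φ (A \ K') (X \ K₀))
    (hlip : ∀ p ∈ A \ K', ∀ q ∈ A \ K',
      l⁻¹ * ‖p - q‖ ≤ ‖φ p - φ q‖ ∧ ‖φ p - φ q‖ ≤ l * ‖p - q‖)
    (C : ℝ) (hC : 0 < C)
    (hA : ∀ t > (0 : ℝ), μH[(d : ℝ)] (A ∩ Metric.closedBall 0 t) ≤ ENNReal.ofReal (C * t ^ d))
    (hXK : μH[(d : ℝ)] (X ∩ K₀) < ⊤) :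
    ∃ R > (0 : ℝ), ∀ r ≥ (1 : ℝ),
      μH[(d : ℝ)] (X ∩ Metric.closedBall 0 r) ≤ ENNReal.ofReal (R * r ^ d) := by
  set M : ℝ := (μH[(d : ℝ)] (X ∩ K₀)).toReal with hM
  have hM0 : 0 ≤ M := ENNReal.toReal_nonneg
  have hMK : μH[(d : ℝ)] (X ∩ K₀) ≤ ENNReal.ofReal (M + 1) := by
    rw [← ENNReal.ofReal_toReal hXK.ne]
    exact ENNReal.ofReal_le_ofReal (by linarith)
  have hl0 : (0:ℝ) < l := lt_of_lt_of_le one_pos hl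
  by_cases hne : (A \ K').Nonempty
  · obtain ⟨p₀, hp₀⟩ := hne
    set b : ℝ := l * ‖φ p₀‖ + ‖p₀‖ with hb
    have hb0 : 0 ≤ b := by positivity
    refine ⟨M + 1 + l ^ d * C * (l + b) ^ d, by positivity, fun r hr => ?_⟩
    have hr0 : (0:ℝ) < r := lt_of_lt_of_le one_pos hr
    -- the Lipschitz constant
    set K : ℝ≥0 := ⟨l, hl0.le⟩ with hK
    have hlipOn : LipschitzOnWith K φ (A \ K') := by
      intro p hp q hq
      have := (hlip p hp q hq).2
      rw [edist_dist, edist_dist, dist_eq_norm, dist_eq_norm]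
      rw [← ENNReal.ofReal_coe_nnreal, ← ENNReal.ofReal_mul (by positivity)]
      exact ENNReal.ofReal_le_ofReal (by exact this)
    set S : Set (EuclideanSpace ℝ (Fin m)) :=
      (A \ K') ∩ φ ⁻¹' (Metric.closedBall 0 r) with hS
    -- covering
    have hcov : X ∩ Metric.closedBall 0 r ⊆ (X ∩ K₀) ∪ φ '' S := by
      rintro x ⟨hxX, hxr⟩
      by_cases hxK : x ∈ K₀
      · exact Or.inl ⟨hxX, hxK⟩
      · obtain ⟨p, hp, hpx⟩ := hbij.surjOn ⟨hxX, hxK⟩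
        exact Or.inr ⟨p, ⟨hp, by simpa [hpx] using hxr⟩, hpx⟩
    -- S is contained in a ball
    have hSsub : S ⊆ A ∩ Metric.closedBall 0 (l * r + b) := by
      rintro p ⟨hp, hpr⟩
      refine ⟨hp.1, ?_⟩
      have h1 := (hlip p hp p₀ hp₀).1
      have h2 : ‖φ p - φ p₀‖ ≤ ‖φ p‖ + ‖φ p₀‖ := norm_sub_le _ _
      have h3 : ‖φ p‖ ≤ r := by simpa [Metric.mem_closedBall, dist_eq_norm] using hpr
      have h4 : ‖p‖ - ‖p₀‖ ≤ ‖p - p₀‖ := norm_sub_norm_le _ _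
      have h5 : l⁻¹ * ‖p - p₀‖ ≤ r + ‖φ p₀‖ := by linarith
      have h6 : ‖p - p₀‖ ≤ l * (r + ‖φ p₀‖) := by
        have := mul_le_mul_of_nonneg_left h5 hl0.le
        rwa [mul_inv_cancel_left₀ hl0.ne'] at this
      simp only [Metric.mem_closedBall, dist_eq_norm, sub_zero]
      nlinarith
    have hμS : μH[(d : ℝ)] S ≤ ENNReal.ofReal (C * (l * r + b) ^ d) :=
      le_trans (measure_mono hSsub) (hA _ (by positivity))
    have himg : μH[(d : ℝ)] (φ '' S) ≤ ENNReal.ofReal (l ^ d * (C * (l * r + b) ^ d)) := by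
      have hlipS : LipschitzOnWith K φ S := hlipOn.mono Set.inter_subset_left
      have h1 : μH[(d : ℝ)] (φ '' S) ≤ (K : ℝ≥0∞) ^ (d : ℝ) * μH[(d : ℝ)] S :=
        hlipS.hausdorffMeasure_image_le (by positivity)
      have h2 : (K : ℝ≥0∞) ^ (d : ℝ) = ENNReal.ofReal (l ^ d) := by
        rw [show ((K : ℝ≥0∞)) = ENNReal.ofReal l from by
          simp [hK, ENNReal.ofReal, Real.toNNReal, hl0.le]; rfl]
        rw [ENNReal.ofReal_rpow_of_pos hl0, Real.rpow_natCast]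
      calc μH[(d : ℝ)] (φ '' S) ≤ (K : ℝ≥0∞) ^ (d : ℝ) * μH[(d : ℝ)] S := h1
        _ ≤ ENNReal.ofReal (l ^ d) * ENNReal.ofReal (C * (l * r + b) ^ d) := by
            rw [h2]; exact mul_le_mul_right hμS _
        _ = ENNReal.ofReal (l ^ d * (C * (l * r + b) ^ d)) := by
            rw [← ENNReal.ofReal_mul (by positivity)]
    calc μH[(d : ℝ)] (X ∩ Metric.closedBall 0 r)
        ≤ μH[(d : ℝ)] ((X ∩ K₀) ∪ φ '' S) := measure_mono hcov
      _ ≤ μH[(d : ℝ)] (X ∩ K₀) + μH[(d : ℝ)] (φ '' S) := measure_union_le _ _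
      _ ≤ ENNReal.ofReal (M + 1) + ENNReal.ofReal (l ^ d * (C * (l * r + b) ^ d)) :=
          add_le_add hMK himg
      _ = ENNReal.ofReal ((M + 1) + l ^ d * (C * (l * r + b) ^ d)) := by
          rw [← ENNReal.ofReal_add (by linarith) (by positivity)]
      _ ≤ ENNReal.ofReal ((M + 1 + l ^ d * C * (l + b) ^ d) * r ^ d) := by
          apply ENNReal.ofReal_le_ofReal
          have hrd : (1:ℝ) ≤ r ^ d := one_le_pow₀ hr
          have hlt : l * r + b ≤ (l + b) * r := by nlinarith
          have hpow : (l * r + b) ^ d ≤ ((l + b) * r) ^ d :=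
            pow_le_pow_left₀ (by positivity) hlt d
          have : l ^ d * (C * (l * r + b) ^ d) ≤ l ^ d * C * (l + b) ^ d * r ^ d := by
            calc l ^ d * (C * (l * r + b) ^ d) ≤ l ^ d * (C * ((l + b) * r) ^ d) := by
                  gcongr
              _ = l ^ d * C * (l + b) ^ d * r ^ d := by rw [mul_pow]; ring
          nlinarith
  · -- A \ K' empty, so X \ K₀ empty
    have hXsub : X ∩ Metric.closedBall 0 1 ⊆ X := Set.inter_subset_left
    have hXK₀ : X ⊆ K₀ := by
      intro x hx
      by_contra hxK
      obtain ⟨p, hp, -⟩ := hbij.surjOn ⟨hx, hxK⟩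
      exact hne ⟨p, hp⟩
    refine ⟨M + 1, by linarith, fun r hr => ?_⟩
    have hrd : (1:ℝ) ≤ r ^ d := one_le_pow₀ hr
    calc μH[(d : ℝ)] (X ∩ Metric.closedBall 0 r)
        ≤ μH[(d : ℝ)] (X ∩ K₀) :=
          measure_mono (fun x hx => ⟨hx.1, hXK₀ hx.1⟩)
      _ ≤ ENNReal.ofReal (M + 1) := hMK
      _ ≤ ENNReal.ofReal ((M + 1) * r ^ d) := ENNReal.ofReal_le_ofReal (by nlinarith)
end

section
/- Let X = {(x, y) ∈ ℝ² : y · sin(log(x² + y² + 1)) = 0}. Define t_j = (e^{jπ} − 1)^{1/2} and s_j = (e^{jπ + π/2} − 1)^{1/2}. Then the vector (0,1) belongs to the tangent cone of X at infinity with respect to the sequence (t_j) but not to the tangent cone at infinity with respect to (s_j); in particular the two tangent cones at infinity differ. -/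
open Filter Real

/-- The tangent cone at infinity of `X` with respect to a sequence `t` of scales. -/
def tangentConeAtInfty {E : Type*} [NormedAddCommGroup E] [NormedSpace ℝ E]
    (t : ℕ → ℝ) (X : Set E) : Set E :=
  {v | ∃ x : ℕ → E, (∀ j, x j ∈ X) ∧
    Filter.Tendsto (fun j => (t j)⁻¹ • x j) Filter.atTop (nhds v)}

lemma aux_mem_first :
    ((0, 1) : ℝ × ℝ) ∈ tangentConeAtInfty
        (fun j : ℕ => Real.sqrt (Real.exp (j * Real.pi) - 1))
        {p : ℝ × ℝ | p.2 * Real.sin (Real.log (p.1 ^ 2 + p.2 ^ 2 + 1)) = 0} := by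
  refine ⟨fun j : ℕ => (0, Real.sqrt (Real.exp (j * Real.pi) - 1)), ?_, ?_⟩
  · intro j
    have h0 : (0:ℝ) ≤ Real.exp (j * Real.pi) - 1 := by
      have : Real.exp 0 ≤ Real.exp (j * Real.pi) := Real.exp_le_exp.2 (by positivity)
      simpa using this
    simp only [Set.mem_setOf_eq]
    have e1 : (0:ℝ)^2 + Real.sqrt (Real.exp (j * Real.pi) - 1) ^ 2 + 1
        = Real.exp (j * Real.pi) := by
      rw [Real.sq_sqrt h0]; ring
    show Real.sqrt (Real.exp (j * Real.pi) - 1) *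
      Real.sin (Real.log ((0:ℝ)^2 + Real.sqrt (Real.exp (j * Real.pi) - 1) ^ 2 + 1)) = 0
    rw [e1, Real.log_exp, Real.sin_nat_mul_pi, mul_zero]
  · have hev : ∀ᶠ j in Filter.atTop,
        ((0:ℝ), (1:ℝ)) =
          (Real.sqrt (Real.exp ((j:ℕ) * Real.pi) - 1))⁻¹ •
            ((0:ℝ), Real.sqrt (Real.exp ((j:ℕ) * Real.pi) - 1)) := by
      filter_upwards [Filter.eventually_ge_atTop 1] with j hj
      have hj1 : (1:ℝ) ≤ (j:ℝ) := by exact_mod_cast hj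
      have hpos : 0 < Real.exp (j * Real.pi) - 1 := by
        have : (1:ℝ) < Real.exp (j * Real.pi) := by
          rw [Real.one_lt_exp_iff]
          have := Real.pi_pos
          nlinarith
        linarith
      have hs : Real.sqrt (Real.exp (j * Real.pi) - 1) ≠ 0 :=
        ne_of_gt (Real.sqrt_pos.2 hpos)
      rw [Prod.smul_mk, smul_eq_mul, smul_eq_mul, mul_zero, inv_mul_cancel₀ hs]
    exact tendsto_const_nhds.congr' (by filter_upwards [hev] with j h using h)

lemma aux_not_mem_second :
    ((0, 1) : ℝ × ℝ) ∉ tangentConeAtInfty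
        (fun j : ℕ => Real.sqrt (Real.exp (j * Real.pi + Real.pi / 2) - 1))
        {p : ℝ × ℝ | p.2 * Real.sin (Real.log (p.1 ^ 2 + p.2 ^ 2 + 1)) = 0} := by
  rintro ⟨x, hxX, hlim⟩
  set s : ℕ → ℝ := fun j : ℕ => Real.sqrt (Real.exp (j * Real.pi + Real.pi / 2) - 1) with hs
  have hexp1 : ∀ j : ℕ, (1:ℝ) < Real.exp (j * Real.pi + Real.pi / 2) := by
    intro j
    rw [Real.one_lt_exp_iff]
    positivity
  have hspos : ∀ j, 0 < s j := fun j => Real.sqrt_pos.2 (by linarith [hexp1 j])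
  have hssq : ∀ j : ℕ, (s j) ^ 2 = Real.exp (j * Real.pi + Real.pi / 2) - 1 := fun j =>
    Real.sq_sqrt (by linarith [hexp1 j])
  have hf1 : Filter.Tendsto (fun j => (s j)⁻¹ * (x j).1) Filter.atTop (nhds 0) := by
    have := (continuous_fst.tendsto ((0:ℝ),(1:ℝ))).comp hlim
    simpa [Function.comp_def] using this
  have hf2 : Filter.Tendsto (fun j => (s j)⁻¹ * (x j).2) Filter.atTop (nhds 1) := by
    have := (continuous_snd.tendsto ((0:ℝ),(1:ℝ))).comp hlim
    simpa [Function.comp_def] using this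
  have hq : Filter.Tendsto
      (fun j => ((s j)⁻¹ * (x j).1) ^ 2 + ((s j)⁻¹ * (x j).2) ^ 2)
      Filter.atTop (nhds 1) := by
    have := ((hf1.pow 2).add (hf2.pow 2))
    norm_num at this
    exact this
  have hev1 : ∀ᶠ j in Filter.atTop, (0:ℝ) < (s j)⁻¹ * (x j).2 :=
    hf2.eventually (eventually_gt_nhds one_pos)
  have hev2 : ∀ᶠ j in Filter.atTop,
      ((s j)⁻¹ * (x j).1) ^ 2 + ((s j)⁻¹ * (x j).2) ^ 2 ∈ Set.Ioo (1/2 : ℝ) 2 :=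
    hq.eventually (Ioo_mem_nhds (by norm_num) (by norm_num))
  obtain ⟨j, hj1, hj2⟩ := (hev1.and hev2).exists
  set a := (x j).1
  set b := (x j).2
  have hb : b ≠ 0 := by
    intro h
    rw [h, mul_zero] at hj1
    exact lt_irrefl _ hj1
  have hX := hxX j
  simp only [Set.mem_setOf_eq] at hX
  have hsin : Real.sin (Real.log (a ^ 2 + b ^ 2 + 1)) = 0 := by
    rcases mul_eq_zero.1 hX with h | h
    · exact absurd h hb
    · exact h
  obtain ⟨n, hn⟩ := Real.sin_eq_zero_iff.1 hsin
  have hNpos : (0:ℝ) < a ^ 2 + b ^ 2 + 1 := by positivity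
  have hN : a ^ 2 + b ^ 2 + 1 = Real.exp ((n:ℝ) * Real.pi) := by
    rw [hn, Real.exp_log hNpos]
  --turn hj2 into bounds on (exp(nπ)-1)/D
  have hab : a ^ 2 + b ^ 2 = Real.exp ((n:ℝ) * Real.pi) - 1 := by linarith
  have hqval : ((s j)⁻¹ * a) ^ 2 + ((s j)⁻¹ * b) ^ 2
      = (Real.exp ((n:ℝ) * Real.pi) - 1) / (Real.exp (j * Real.pi + Real.pi / 2) - 1) := by
    have h1 : ((s j)⁻¹ * a) ^ 2 + ((s j)⁻¹ * b) ^ 2 = (a ^ 2 + b ^ 2) / (s j) ^ 2 := by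
      field_simp
    rw [h1, hab, hssq]
  rw [hqval] at hj2
  obtain ⟨hlo, hhi⟩ := hj2
  have hD : (0:ℝ) < Real.exp (j * Real.pi + Real.pi / 2) - 1 := by linarith [hexp1 j]
  have hc : (5:ℝ)/2 ≤ Real.exp (Real.pi / 2) := by
    have h1 := Real.add_one_le_exp (Real.pi / 2)
    have h2 := Real.pi_gt_three
    linarith
  have hE : (1:ℝ) ≤ Real.exp ((j:ℝ) * Real.pi) := Real.one_le_exp (by positivity)
  have hDval : Real.exp ((j:ℝ) * Real.pi + Real.pi / 2)
      = Real.exp ((j:ℝ) * Real.pi) * Real.exp (Real.pi / 2) := Real.exp_add _ _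
  rcases le_or_gt n (j:ℤ) with hnj | hnj
  · -- exp(nπ) ≤ exp(jπ), so ratio ≤ 1/2, contradicting hlo
    have hle : Real.exp ((n:ℝ) * Real.pi) ≤ Real.exp ((j:ℝ) * Real.pi) := by
      apply Real.exp_le_exp.2
      have : (n:ℝ) ≤ (j:ℝ) := by exact_mod_cast hnj
      nlinarith [Real.pi_pos]
    rw [lt_div_iff₀ hD] at hlo
    nlinarith
  · -- n ≥ j+1, exp(nπ) ≥ exp(jπ+π), ratio ≥ 2
    have hge : Real.exp ((j:ℝ) * Real.pi) * Real.exp (Real.pi / 2) * Real.exp (Real.pi / 2)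
        ≤ Real.exp ((n:ℝ) * Real.pi) := by
      rw [← Real.exp_add, ← Real.exp_add]
      apply Real.exp_le_exp.2
      have : (j:ℝ) + 1 ≤ (n:ℝ) := by exact_mod_cast hnj
      nlinarith [Real.pi_pos]
    rw [div_lt_iff₀ hD] at hhi
    nlinarith [Real.exp_pos (Real.pi / 2)]

/-- For `X = {(x,y) : y · sin(log(x² + y² + 1)) = 0}` the tangent cones at infinity with respect
to the sequences `t_j = (e^{jπ} − 1)^{1/2}` and `s_j = (e^{jπ + π/2} − 1)^{1/2}` differ:
`(0,1)` belongs to the first but not the second. -/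
theorem tangent_cone_at_infty_not_unique :
    ((0, 1) : ℝ × ℝ) ∈ tangentConeAtInfty
        (fun j : ℕ => Real.sqrt (Real.exp (j * Real.pi) - 1))
        {p : ℝ × ℝ | p.2 * Real.sin (Real.log (p.1 ^ 2 + p.2 ^ 2 + 1)) = 0} ∧
    ((0, 1) : ℝ × ℝ) ∉ tangentConeAtInfty
        (fun j : ℕ => Real.sqrt (Real.exp (j * Real.pi + Real.pi / 2) - 1))
        {p : ℝ × ℝ | p.2 * Real.sin (Real.log (p.1 ^ 2 + p.2 ^ 2 + 1)) = 0} ∧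
    tangentConeAtInfty (fun j : ℕ => Real.sqrt (Real.exp (j * Real.pi) - 1))
        {p : ℝ × ℝ | p.2 * Real.sin (Real.log (p.1 ^ 2 + p.2 ^ 2 + 1)) = 0} ≠
      tangentConeAtInfty (fun j : ℕ => Real.sqrt (Real.exp (j * Real.pi + Real.pi / 2) - 1))
        {p : ℝ × ℝ | p.2 * Real.sin (Real.log (p.1 ^ 2 + p.2 ^ 2 + 1)) = 0} := by
  refine ⟨aux_mem_first, aux_not_mem_second, ?_⟩
  intro h
  exact aux_not_mem_second (h ▸ aux_mem_first)
end

section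
/- Let φ : ℝᵖ → ℝᵖ be λ-bi-Lipschitz (with (1/λ)‖x−y‖ ≤ ‖φ(x)−φ(y)‖ ≤ λ‖x−y‖), φ(0) = 0, and define φ_t(v) = (1/t)·φ(t·v) for t > 0. Suppose A ⊆ ℝᵖ, T = (t_j) is a sequence of positive reals with t_j → ∞, and φ_{t_j} converges uniformly on compact sets to a map dφ : ℝᵖ → ℝᵖ. Then dφ(C^T_∞(A)) ⊆ C^T_∞(φ(A)). -/
/-- If the rescalings `φ_{t_j}` of a bi-Lipschitz map `φ` converge uniformly on compact sets
to `dφ`, then `dφ` maps the tangent cone of `A` at infinity (w.r.t. `T`) into the tangent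
cone of `φ(A)` at infinity (w.r.t. `T`). -/
theorem rescaled_biLipschitz_maps_tangent_cone (p : ℕ) (l : ℝ) (hl : 1 ≤ l)
    (φ : EuclideanSpace ℝ (Fin p) → EuclideanSpace ℝ (Fin p)) (hφ0 : φ 0 = 0)
    (hlip : ∀ x y : EuclideanSpace ℝ (Fin p),
      l⁻¹ * ‖x - y‖ ≤ ‖φ x - φ y‖ ∧ ‖φ x - φ y‖ ≤ l * ‖x - y‖)
    (A : Set (EuclideanSpace ℝ (Fin p)))
    (t : ℕ → ℝ) (ht : ∀ j, 0 < t j) (htop : Filter.Tendsto t Filter.atTop Filter.atTop)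
    (dφ : EuclideanSpace ℝ (Fin p) → EuclideanSpace ℝ (Fin p))
    (hconv : ∀ K : Set (EuclideanSpace ℝ (Fin p)), IsCompact K →
      TendstoUniformlyOn (fun j => fun v => (t j)⁻¹ • φ (t j • v)) dφ Filter.atTop K) :
    dφ '' tangentConeAtInfty t A ⊆ tangentConeAtInfty t (φ '' A) := by
  -- pointwise convergence of the rescalings
  have hptwise : ∀ w, Filter.Tendsto (fun j => (t j)⁻¹ • φ (t j • w))
      Filter.atTop (nhds (dφ w)) := fun w =>
    (hconv {w} isCompact_singleton).tendsto_at (Set.mem_singleton w)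
  -- dφ is l-Lipschitz
  have hdlip : ∀ x y, dist (dφ x) (dφ y) ≤ l * dist x y := by
    intro x y
    refine le_of_tendsto ((hptwise x).dist (hptwise y)) ?_
    filter_upwards with j
    have hne := (ht j).ne'
    have h1 : dist ((t j)⁻¹ • φ (t j • x)) ((t j)⁻¹ • φ (t j • y))
        = (t j)⁻¹ * dist (φ (t j • x)) (φ (t j • y)) := by
      rw [dist_smul₀, Real.norm_eq_abs, abs_of_pos (inv_pos.mpr (ht j))]
    rw [h1]
    have h2 : dist (φ (t j • x)) (φ (t j • y)) ≤ l * dist (t j • x) (t j • y) := by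
      rw [dist_eq_norm, dist_eq_norm]; exact (hlip _ _).2
    have h3 : dist (t j • x) (t j • y) = t j * dist x y := by
      rw [dist_smul₀, Real.norm_eq_abs, abs_of_pos (ht j)]
    calc (t j)⁻¹ * dist (φ (t j • x)) (φ (t j • y))
        ≤ (t j)⁻¹ * (l * (t j * dist x y)) := by
          apply mul_le_mul_of_nonneg_left _ (inv_pos.mpr (ht j)).le
          rw [← h3]; exact h2
      _ = l * dist x y := by field_simp
  have hdcont : Continuous dφ := by
    have : LipschitzWith (Real.toNNReal l) dφ := by
      apply LipschitzWith.of_dist_le_mul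
      intro x y
      rw [Real.coe_toNNReal l (le_trans zero_le_one hl)]
      exact hdlip x y
    exact this.continuous
  rintro w ⟨v, ⟨x, hxA, hxt⟩, rfl⟩
  refine ⟨fun j => φ (x j), fun j => ⟨x j, hxA j, rfl⟩, ?_⟩
  have hK : IsCompact (Metric.closedBall v 1) := isCompact_closedBall v 1
  have hmem : ∀ᶠ j in Filter.atTop, (t j)⁻¹ • x j ∈ Metric.closedBall v 1 :=
    hxt.eventually (Metric.closedBall_mem_nhds v one_pos)
  have hg : Filter.Tendsto (fun j => (t j)⁻¹ • x j) Filter.atTop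
      (nhdsWithin v (Metric.closedBall v 1)) :=
    tendsto_nhdsWithin_iff.mpr ⟨hxt, hmem⟩
  have := (hconv _ hK).tendsto_comp (hdcont.continuousWithinAt) hg
  convert this using 2 with j
  rw [smul_smul, mul_inv_cancel₀ (ht j).ne', one_smul]
end

section
/- The set Y = {(x, y) ∈ ℂ² : y = x²} is not Lipschitz regular at infinity; that is, there is no k and no bi-Lipschitz homeomorphism between Y \ K and ℂᵏ \ K' for compact sets K, K'. -/
private lemma aux_cos {t A B r ca : ℝ} (ht : 0 < t) (hA : t/2 < A) (hB : t/2 < B)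
    (hAB : A * r = B) (hca1 : ca ≤ 1)
    (h1 : A^2 * (r^2 - 2*(r*ca) + 1) ≤ (t/2)^2) : 1/2 ≤ ca := by
  obtain rfl : B = A * r := hAB.symm
  by_contra hcon
  push_neg at hcon
  have h2 : 2*(A*(A*r))*(1-ca) ≤ (t/2)^2 := by nlinarith [sq_nonneg (A*(r-1))]
  have h3 : (t/2)*(t/2) < A*(A*r) := mul_lt_mul'' hA hB (by linarith) (by linarith)
  nlinarith [mul_pos (sub_pos.mpr h3) (show (0:ℝ) < 1 - ca by linarith)]

private lemma aux_chord {r sa ca X : ℝ} (hpyth : sa^2 + ca^2 = 1)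
    (hX : X^2 = (r^2*(ca^2 - sa^2) - 1)^2 + (2*r^2*(ca*sa))^2) (hX0 : 0 ≤ X)
    (hr : 0 ≤ r) : 2*r*|sa| ≤ X := by
  have hid : X^2 = 4*r^2*sa^2 + (r^2-1)^2 := by
    rw [hX]; linear_combination (r^4*(sa^2+ca^2+1) - 2*r^2) * hpyth
  have h2 : (2*r*|sa|)^2 ≤ X^2 := by
    rw [hid]
    have hsq : |sa|^2 = sa^2 := sq_abs sa
    nlinarith [sq_nonneg (r^2 - 1), hsq]
  exact le_of_pow_le_pow_left₀ two_ne_zero hX0 h2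

set_option maxHeartbeats 1000000 in
/-- Key step estimate for a single step of a chain on the parabola. -/
lemma parabola_step (t : ℝ) (ht : 1 ≤ t) (u v : ℂ)
    (hu : t / 2 < ‖u‖) (hv : t / 2 < ‖v‖)
    (huv : ‖v - u‖ ≤ t / 2) :
    t ^ 2 / Real.pi * |Complex.arg (v / u)| ≤ ‖v ^ 2 - u ^ 2‖ := by
  have ht0 : (0:ℝ) < t := by linarith
  have hune : u ≠ 0 := by
    intro h; rw [h] at hu; simp at hu; linarith
  have hvne : v ≠ 0 := by
    intro h; rw [h] at hv; simp at hv; linarith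
  have hzne : v / u ≠ 0 := div_ne_zero hvne hune
  have hr0 : 0 < ‖v / u‖ := norm_pos_iff.mpr hzne
  obtain ⟨r, hrdef⟩ : ∃ r, ‖v / u‖ = r := ⟨_, rfl⟩
  obtain ⟨θ, hθdef⟩ : ∃ θ, Complex.arg (v / u) = θ := ⟨_, rfl⟩
  obtain ⟨ca, hcadef⟩ : ∃ ca, Real.cos θ = ca := ⟨_, rfl⟩
  obtain ⟨sa, hsadef⟩ : ∃ sa, Real.sin θ = sa := ⟨_, rfl⟩
  rw [hrdef] at hr0
  have hpyth : sa ^ 2 + ca ^ 2 = 1 := by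
    rw [← hcadef, ← hsadef]; exact Real.sin_sq_add_cos_sq θ
  have hre : (v / u).re = r * ca := by
    have h := Complex.cos_arg hzne
    rw [hθdef, hcadef, hrdef] at h
    rw [h, mul_div_assoc', mul_div_cancel_left₀ _ hr0.ne']
  have him : (v / u).im = r * sa := by
    have h := Complex.sin_arg (v / u)
    rw [hθdef, hsadef, hrdef] at h
    rw [h, mul_div_assoc', mul_div_cancel_left₀ _ hr0.ne']
  have hAB : ‖u‖ * r = ‖v‖ := by
    rw [← hrdef, norm_div]
    exact mul_div_cancel₀ _ (norm_ne_zero_iff.mpr hune)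
  -- chord bound on x gives cos θ ≥ 1/2
  have hvu : v - u = u * (v / u - 1) := by field_simp
  have habsvu : ‖v - u‖ = ‖u‖ * ‖v / u - 1‖ := by
    rw [hvu, norm_mul]
  have habsz1 : ‖v / u - 1‖ ^ 2 = r ^ 2 - 2 * (r * ca) + 1 := by
    rw [Complex.sq_norm, Complex.normSq_apply]
    simp only [Complex.sub_re, Complex.sub_im, Complex.one_re, Complex.one_im]
    rw [hre, him]
    nlinarith [hpyth]
  have hca : (1:ℝ)/2 ≤ ca := by
    have h1 : ‖v - u‖ ^ 2 ≤ (t/2) ^ 2 := by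
      have := norm_nonneg (v - u)
      nlinarith
    rw [habsvu, mul_pow, habsz1] at h1
    have hca1 : ca ≤ 1 := hcadef ▸ Real.cos_le_one θ
    exact aux_cos ht0 hu hv hAB hca1 h1
  -- hence |θ| ≤ π/2
  have hθpi : |θ| ≤ Real.pi := hθdef ▸ Complex.abs_arg_le_pi (v / u)
  have hθle : |θ| ≤ Real.pi / 2 := by
    by_contra h
    push_neg at h
    have h2 : Real.cos |θ| ≤ 0 :=
      Real.cos_nonpos_of_pi_div_two_le_of_le h.le (by linarith [Real.pi_pos])
    rw [Real.cos_abs, hcadef] at h2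
    linarith
  -- Jordan inequality
  have hsin : 2 / Real.pi * |θ| ≤ |sa| := by
    rw [← hsadef]
    rcases abs_cases θ with ⟨he, h0⟩ | ⟨he, h0⟩
    · rw [he] at hθle ⊢
      exact (Real.mul_le_sin h0 hθle).trans (le_abs_self _)
    · rw [he] at hθle ⊢
      have h3 := Real.mul_le_sin (by linarith : (0:ℝ) ≤ -θ) hθle
      rw [Real.sin_neg] at h3
      exact h3.trans (neg_le_abs _)
  -- chord bound on y
  have hy2 : v ^ 2 - u ^ 2 = u ^ 2 * ((v / u) ^ 2 - 1) := by field_simp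
  have habsy : ‖v ^ 2 - u ^ 2‖
      = ‖u‖ ^ 2 * ‖(v / u) ^ 2 - 1‖ := by
    rw [hy2, norm_mul, norm_pow]
  have hXsq : ‖(v / u) ^ 2 - 1‖ ^ 2
      = (r^2*(ca^2 - sa^2) - 1)^2 + (2*r^2*(ca*sa))^2 := by
    rw [Complex.sq_norm, Complex.normSq_apply]
    simp only [Complex.sub_re, Complex.sub_im, Complex.one_re, Complex.one_im]
    rw [sq (v/u), Complex.mul_re, Complex.mul_im, hre, him]
    ring
  have hzabs : 2 * r * |sa| ≤ ‖(v / u) ^ 2 - 1‖ :=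
    aux_chord hpyth hXsq (norm_nonneg _) (le_of_lt hr0)
  have hfinal : t ^ 2 / 2 * |sa| ≤ ‖v ^ 2 - u ^ 2‖ := by
    rw [habsy]
    have h3 : ‖u‖ ^ 2 * (2 * r * |sa|)
        ≤ ‖u‖ ^ 2 * ‖(v / u) ^ 2 - 1‖ :=
      mul_le_mul_of_nonneg_left hzabs (by positivity)
    refine le_trans ?_ h3
    have h5 : t ^ 2 / 2 ≤ 2 * (‖u‖ * (‖u‖ * r)) := by
      have h6 : t/2*(t/2) < ‖u‖ * (‖u‖ * r) := by
        calc t/2*(t/2) < ‖u‖ * ‖v‖ :=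
              mul_lt_mul'' hu hv (by linarith) (by linarith)
          _ = _ := by rw [← hAB]
      nlinarith
    calc t ^ 2 / 2 * |sa| ≤ 2 * (‖u‖ * (‖u‖ * r)) * |sa| :=
          mul_le_mul_of_nonneg_right h5 (abs_nonneg _)
      _ = ‖u‖ ^ 2 * (2 * r * |sa|) := by ring
  rw [hθdef]
  have heq : t ^ 2 / Real.pi * |θ| = t ^ 2 / 2 * (2 / Real.pi * |θ|) := by
    field_simp
  rw [heq]
  exact le_trans (mul_le_mul_of_nonneg_left hsin (by positivity)) hfinal

set_option maxHeartbeats 1000000 in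
/-- Any chain on the parabola from `(t, t²)` to `(-t, t²)` with steps of size at most `t/2`
has total `y`-variation at least `t²`. -/
lemma parabola_chain (t : ℝ) (ht : 1 ≤ t) (n : ℕ) (x : ℕ → ℂ)
    (h0 : x 0 = (t : ℂ)) (hn : x n = -(t : ℂ))
    (hstep : ∀ j < n, ‖x (j + 1) - x j‖ ≤ t / 2) :
    t ^ 2 ≤ ∑ j ∈ Finset.range n, ‖x (j + 1) ^ 2 - x j ^ 2‖ := by
  have ht0 : (0:ℝ) < t := by linarith
  have habs0 : ‖x 0‖ = t := by
    rw [h0, Complex.norm_real, Real.norm_eq_abs, abs_of_pos ht0]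
  have habsn : ‖x n‖ = t := by
    rw [hn, norm_neg, Complex.norm_real, Real.norm_eq_abs, abs_of_pos ht0]
  have key : ∀ a b : ℕ, a ≤ b →
      ‖x b ^ 2 - x a ^ 2‖ ≤
        ∑ i ∈ Finset.Ico a b, ‖x (i + 1) ^ 2 - x i ^ 2‖ := by
    intro a b hab
    have h := dist_le_Ico_sum_dist (fun i => (x i) ^ 2) hab
    simp only [Complex.dist_eq] at h
    calc ‖x b ^ 2 - x a ^ 2‖ = ‖x a ^ 2 - x b ^ 2‖ :=
          norm_sub_rev _ _
      _ ≤ ∑ i ∈ Finset.Ico a b, ‖x i ^ 2 - x (i + 1) ^ 2‖ := h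
      _ = ∑ i ∈ Finset.Ico a b, ‖x (i + 1) ^ 2 - x i ^ 2‖ :=
          Finset.sum_congr rfl fun i _ => norm_sub_rev _ _
  by_cases hcase : ∀ j ≤ n, t / 2 < ‖x j‖
  · -- all points stay far from the origin: winding argument
    have hne : ∀ j ≤ n, x j ≠ 0 := by
      intro j hj h
      have := hcase j hj
      rw [h, norm_zero] at this
      linarith
    -- telescoping product of the ratios
    have hprod : ∀ m ≤ n, ∏ j ∈ Finset.range m, (x (j + 1) / x j) = x m / x 0 := by
      intro m hm
      induction m with
      | zero => simp [div_self (hne 0 (Nat.zero_le n))]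
      | succ m ih =>
        rw [Finset.prod_range_succ, ih (by omega), div_mul_div_comm,
          mul_comm (x 0) (x m),
          mul_div_mul_left _ _ (hne m (by omega))]
    have hprodval : ∏ j ∈ Finset.range n, (x (j + 1) / x j) = -1 := by
      rw [hprod n le_rfl, hn, h0]
      rw [div_eq_iff (by exact_mod_cast ht0.ne' : (t:ℂ) ≠ 0)]
      ring
    -- the sum of the arguments of the ratios
    have hexp : Complex.exp ((↑(∑ j ∈ Finset.range n, Complex.arg (x (j + 1) / x j)) : ℂ)
        * Complex.I) = -1 := by
      have h1 : ∀ j ∈ Finset.range n,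
          Complex.exp ((Complex.arg (x (j + 1) / x j) : ℂ) * Complex.I)
            = (x (j + 1) / x j) / ((‖x (j + 1) / x j‖ : ℝ) : ℂ) := by
        intro j hj
        rw [Finset.mem_range] at hj
        have hz : x (j + 1) / x j ≠ 0 :=
          div_ne_zero (hne (j + 1) (by omega)) (hne j (by omega))
        have h2 := Complex.norm_mul_exp_arg_mul_I (x (j + 1) / x j)
        have h3 : ((‖x (j + 1) / x j‖ : ℝ) : ℂ) ≠ 0 := by
          exact_mod_cast (norm_ne_zero_iff.mpr hz)
        rw [eq_div_iff h3, mul_comm]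
        exact h2
      have h4 : ((↑(∑ j ∈ Finset.range n, Complex.arg (x (j + 1) / x j)) : ℂ) * Complex.I)
          = ∑ j ∈ Finset.range n, (Complex.arg (x (j + 1) / x j) : ℂ) * Complex.I := by
        rw [← Finset.sum_mul]
        norm_cast
      rw [h4, Complex.exp_sum, Finset.prod_congr rfl h1, Finset.prod_div_distrib]
      have h5 : ∏ j ∈ Finset.range n, ((‖x (j + 1) / x j‖ : ℝ) : ℂ)
          = ((∏ j ∈ Finset.range n, ‖x (j + 1) / x j‖ : ℝ) : ℂ) := by
        push_cast
        rfl
      have h6 : ∏ j ∈ Finset.range n, ‖x (j + 1) / x j‖ = 1 := by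
        rw [← norm_prod, hprodval]
        simp
      rw [h5, h6, hprodval]
      norm_num
    -- hence the total argument is an odd multiple of π
    have hΘ : Real.pi ≤ |∑ j ∈ Finset.range n, Complex.arg (x (j + 1) / x j)| := by
      have h7 : Complex.exp (((↑(∑ j ∈ Finset.range n, Complex.arg (x (j + 1) / x j))
          - (Real.pi : ℝ) : ℝ) : ℂ) * Complex.I) = 1 := by
        rw [Complex.ofReal_sub, sub_mul, Complex.exp_sub, hexp, Complex.exp_pi_mul_I]
        norm_num
      rw [Complex.exp_eq_one_iff] at h7
      obtain ⟨m, hm⟩ := h7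
      have h8 : ((↑(∑ j ∈ Finset.range n, Complex.arg (x (j + 1) / x j))
          - (Real.pi : ℝ) : ℝ) : ℂ) = ((m * (2 * Real.pi) : ℝ) : ℂ) := by
        apply mul_right_cancel₀ Complex.I_ne_zero
        rw [hm]
        push_cast
        ring
      have h9 : (∑ j ∈ Finset.range n, Complex.arg (x (j + 1) / x j)) - Real.pi
          = m * (2 * Real.pi) := by exact_mod_cast h8
      have h10 : (∑ j ∈ Finset.range n, Complex.arg (x (j + 1) / x j))
          = (2 * m + 1) * Real.pi := by push_cast at h9 ⊢; linarith
      rw [h10, abs_mul, abs_of_pos Real.pi_pos]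
      have h11 : (1:ℝ) ≤ |(2 * (m:ℝ) + 1)| := by
        have : (2 * m + 1 : ℤ) ≠ 0 := by omega
        have h12 : (1:ℤ) ≤ |2 * m + 1| := Int.one_le_abs this
        calc (1:ℝ) = ((1:ℤ):ℝ) := by norm_num
          _ ≤ ((|2 * m + 1| : ℤ) : ℝ) := by exact_mod_cast h12
          _ = |(2 * (m:ℝ) + 1)| := by push_cast; rfl
      nlinarith [Real.pi_pos]
    -- combine with the per-step estimates
    calc t ^ 2 = t ^ 2 / Real.pi * Real.pi := by field_simp
      _ ≤ t ^ 2 / Real.pi * |∑ j ∈ Finset.range n, Complex.arg (x (j + 1) / x j)| := by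
          apply mul_le_mul_of_nonneg_left hΘ (by positivity)
      _ ≤ t ^ 2 / Real.pi * ∑ j ∈ Finset.range n, |Complex.arg (x (j + 1) / x j)| := by
          apply mul_le_mul_of_nonneg_left (Finset.abs_sum_le_sum_abs _ _) (by positivity)
      _ = ∑ j ∈ Finset.range n, t ^ 2 / Real.pi * |Complex.arg (x (j + 1) / x j)| :=
          Finset.mul_sum _ _ _
      _ ≤ ∑ j ∈ Finset.range n, ‖x (j + 1) ^ 2 - x j ^ 2‖ := by
          apply Finset.sum_le_sum
          intro j hj
          rw [Finset.mem_range] at hj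
          exact parabola_step t ht (x j) (x (j + 1))
            (hcase j (by omega)) (hcase (j + 1) (by omega)) (hstep j hj)
  · -- some point comes close to the origin: the y-coordinate varies a lot
    push_neg at hcase
    obtain ⟨j, hjn, hj⟩ := hcase
    have hyj : ‖x j ^ 2‖ ≤ t ^ 2 / 4 := by
      rw [norm_pow]
      nlinarith [norm_nonneg (x j)]
    have h1 : 3 / 4 * t ^ 2 ≤ ‖x j ^ 2 - x 0 ^ 2‖ := by
      have h2 := norm_sub_norm_le (x 0 ^ 2) (x j ^ 2)
      rw [norm_sub_rev] at h2
      rw [norm_pow, habs0] at h2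
      linarith
    have h3 : 3 / 4 * t ^ 2 ≤ ‖x n ^ 2 - x j ^ 2‖ := by
      have h4 := norm_sub_norm_le (x n ^ 2) (x j ^ 2)
      rw [norm_pow, habsn] at h4
      linarith
    have h5 : (∑ i ∈ Finset.Ico 0 j, ‖x (i + 1) ^ 2 - x i ^ 2‖)
        + ∑ i ∈ Finset.Ico j n, ‖x (i + 1) ^ 2 - x i ^ 2‖
        = ∑ i ∈ Finset.range n, ‖x (i + 1) ^ 2 - x i ^ 2‖ := by
      rw [Finset.range_eq_Ico]
      exact Finset.sum_Ico_consecutive _ (Nat.zero_le j) hjn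
    have h6 := key 0 j (Nat.zero_le j)
    have h7 := key j n hjn
    rw [Finset.range_eq_Ico] at *
    nlinarith

set_option maxHeartbeats 1600000 in
/-- The parabola `Y = {(x, y) ∈ ℂ² : y = x²}` is not Lipschitz regular at infinity: there is
no bi-Lipschitz homeomorphism between `Y \ K` and `ℝᵏ \ K'` for compact sets `K, K'`. -/
theorem parabola_not_lipschitz_regular_at_infty :
    ¬ ∃ (k : ℕ) (K : Set (ℂ × ℂ)) (K' : Set (EuclideanSpace ℝ (Fin k)))
        (φ : ℂ × ℂ → EuclideanSpace ℝ (Fin k)) (l : ℝ),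
      IsCompact K ∧ IsCompact K' ∧ 1 ≤ l ∧
      Set.BijOn φ ({p : ℂ × ℂ | p.2 = p.1 ^ 2} \ K) (Set.univ \ K') ∧
      ∀ p ∈ {p : ℂ × ℂ | p.2 = p.1 ^ 2} \ K, ∀ q ∈ {p : ℂ × ℂ | p.2 = p.1 ^ 2} \ K,
        l⁻¹ * ‖p - q‖ ≤ ‖φ p - φ q‖ ∧ ‖φ p - φ q‖ ≤ l * ‖p - q‖ := by
  rintro ⟨k, K, K', φ, l, hK, hK', hl, hbij, hlip⟩
  have hl0 : (0:ℝ) < l := by linarith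
  obtain ⟨R1, hR1, hKR⟩ := hK.isBounded.subset_closedBall_lt 0 0
  obtain ⟨R2, hR2, hK'R⟩ := hK'.isBounded.subset_closedBall_lt 0 0
  -- points with large second coordinate are not in K
  have hnotK : ∀ w : ℂ × ℂ, R1 < ‖w.2‖ → w ∉ K := by
    intro w hw hwK
    have h1 := hKR hwK
    rw [Metric.mem_closedBall, dist_zero_right] at h1
    exact absurd (le_trans (norm_snd_le w) h1) (not_le.2 hw)
  -- base point
  set s0 : ℝ := R1 + 1 with hs0def
  have hs01 : 1 < s0 := by rw [hs0def]; linarith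
  set z0 : ℂ × ℂ := ((s0:ℂ), (s0:ℂ)^2) with hz0def
  have hz0 : z0 ∈ {p : ℂ × ℂ | p.2 = p.1 ^ 2} \ K := by
    refine ⟨rfl, hnotK z0 ?_⟩
    have h2 : ‖z0.2‖ = s0^2 := by
      rw [hz0def]
      rw [norm_pow, Complex.norm_real, Real.norm_eq_abs, abs_of_pos (by linarith)]
    rw [h2]; nlinarith
  set C0 : ℝ := ‖φ z0‖ with hC0def
  have hC0 : 0 ≤ C0 := norm_nonneg _
  -- the large parameter
  set t : ℝ := s0 + l*(C0 + R2 + 1) + 4*l^2 + 1 with htdef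
  have ht1 : 1 ≤ t := by
    have h3 : 0 ≤ l*(C0 + R2 + 1) := by positivity
    have h4 : 0 ≤ 4*l^2 := by positivity
    rw [htdef]; linarith
  have hts0 : s0 < t := by
    have h3 : 0 ≤ l*(C0 + R2 + 1) := by positivity
    have h4 : 0 ≤ 4*l^2 := by positivity
    rw [htdef]; linarith
  have ht0 : (0:ℝ) < t := by linarith
  have htl : 4*l^2 + 1 ≤ t := by
    have h3 : 0 ≤ l*(C0 + R2 + 1) := by positivity
    rw [htdef]; linarith
  -- the two antipodal points on the parabola
  set p : ℂ × ℂ := ((t:ℂ), (t:ℂ)^2) with hpdef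
  set q : ℂ × ℂ := (-(t:ℂ), (t:ℂ)^2) with hqdef
  have hsndnorm : ‖(t:ℂ)^2‖ = t^2 := by
    rw [norm_pow, Complex.norm_real, Real.norm_eq_abs, abs_of_pos ht0]
  have hp : p ∈ {p : ℂ × ℂ | p.2 = p.1 ^ 2} \ K := by
    refine ⟨rfl, hnotK p ?_⟩
    rw [hpdef]
    show R1 < ‖(t:ℂ)^2‖
    rw [hsndnorm]; nlinarith
  have hq : q ∈ {p : ℂ × ℂ | p.2 = p.1 ^ 2} \ K := by
    refine ⟨(neg_sq _).symm, hnotK q ?_⟩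
    rw [hqdef]
    show R1 < ‖(t:ℂ)^2‖
    rw [hsndnorm]; nlinarith
  -- distance between p and q
  have hpq : ‖p - q‖ = 2*t := by
    have h5 : p - q = (((2*t:ℝ):ℂ), (0:ℂ)) := by
      rw [hpdef, hqdef, Prod.mk_sub_mk]
      simp only [Prod.mk.injEq]
      constructor
      · push_cast; ring
      · ring
    rw [h5, Prod.norm_def]
    have h6 : ‖((2*t:ℝ):ℂ)‖ = 2*t := by
      rw [Complex.norm_real, Real.norm_eq_abs, abs_of_pos (by linarith)]
    rw [h6]
    simp [le_of_lt (by linarith : (0:ℝ) < 2*t)]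
  have hab : ‖φ p - φ q‖ ≤ l * (2*t) := by
    have h := (hlip p hp q hq).2
    rwa [hpq] at h
  -- lower bounds on the norms of the images
  have hlower : ∀ w : ℂ × ℂ, w ∈ {p : ℂ × ℂ | p.2 = p.1 ^ 2} \ K →
      ‖(w - z0).2‖ = t^2 - s0^2 → (t^2 - s0^2)/l - C0 ≤ ‖φ w‖ := by
    intro w hw hw2
    have h1 := (hlip w hw z0 hz0).1
    have h2 : t^2 - s0^2 ≤ ‖w - z0‖ := hw2 ▸ norm_snd_le (w - z0)
    have h3 : (t^2 - s0^2)/l ≤ ‖φ w - φ z0‖ := by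
      rw [div_eq_inv_mul]
      exact le_trans (mul_le_mul_of_nonneg_left h2 (inv_nonneg.2 hl0.le)) h1
    have h4 : ‖φ w - φ z0‖ ≤ ‖φ w‖ + ‖φ z0‖ := norm_sub_le _ _
    rw [← hC0def] at h4
    linarith
  have hsub2 : ((t:ℂ)^2 - (s0:ℂ)^2 : ℂ) = (((t^2 - s0^2 : ℝ)):ℂ) := by push_cast; ring
  have hsubnorm : ‖((t:ℂ)^2 - (s0:ℂ)^2 : ℂ)‖ = t^2 - s0^2 := by
    rw [hsub2, Complex.norm_real, Real.norm_eq_abs, abs_of_pos (by nlinarith)]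
  have hpa : (t^2 - s0^2)/l - C0 ≤ ‖φ p‖ :=
    hlower p hp (by rw [hpdef, hz0def, Prod.mk_sub_mk]; exact hsubnorm)
  -- the key largeness inequality
  have hkey : R2 + l * (2*t) < (t^2 - s0^2)/l - C0 := by
    have e2 : t - s0 = l*(C0 + R2 + 1) + 4*l^2 + 1 := by rw [htdef]; ring
    have e4 : t^2 - s0^2 = (l*(C0 + R2 + 1) + 4*l^2 + 1)*(t + s0) := by
      linear_combination (t + s0) * e2
    have h : (R2 + l*(2*t) + C0) * l < t^2 - s0^2 := by
      rw [e4]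
      nlinarith [mul_nonneg (mul_nonneg hl0.le (add_nonneg hC0 hR2.le))
          (show (0:ℝ) ≤ t + s0 - 1 by linarith),
        mul_pos hl0 (show (0:ℝ) < t + s0 by linarith),
        mul_pos (mul_pos hl0 hl0) ht0, sq_nonneg l]
    have h2 := (lt_div_iff₀ hl0).2 h
    linarith
  -- the chain in the target
  set n : ℕ := ⌈8*l^2⌉₊ with hndef
  have hn8 : (8*l^2 : ℝ) ≤ (n:ℝ) := Nat.le_ceil _
  have hnpos : (0:ℝ) < (n:ℝ) := lt_of_lt_of_le (by positivity) hn8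
  have hnne : (n:ℝ) ≠ 0 := ne_of_gt hnpos
  have hnlt : (n:ℝ) < 8*l^2 + 1 := Nat.ceil_lt_add_one (by positivity)
  set c : ℕ → EuclideanSpace ℝ (Fin k) :=
    fun j => φ p + ((j:ℝ)/(n:ℝ)) • (φ q - φ p) with hcdef
  have hc0 : c 0 = φ p := by rw [hcdef]; simp
  have hcn : c n = φ q := by
    rw [hcdef]; simp only
    rw [div_self hnne, one_smul]
    abel
  have hcstep : ∀ j : ℕ, c (j+1) - c j = ((n:ℝ))⁻¹ • (φ q - φ p) := by
    intro j
    rw [hcdef]; simp only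
    rw [add_sub_add_left_eq_sub, ← sub_smul]
    congr 1
    push_cast
    field_simp
    ring
  have hcstepnorm : ∀ j : ℕ, ‖c (j+1) - c j‖ = ‖φ q - φ p‖ / (n:ℝ) := by
    intro j
    rw [hcstep j, norm_smul, Real.norm_eq_abs, abs_inv, abs_of_pos hnpos,
      inv_mul_eq_div]
  have hcnorm : ∀ j, j ≤ n → c j ∈ Set.univ \ K' := by
    intro j hj
    refine ⟨Set.mem_univ _, fun hmem => ?_⟩
    have h1 := hK'R hmem
    rw [Metric.mem_closedBall, dist_zero_right] at h1
    have h2 : φ p = c j - ((j:ℝ)/(n:ℝ)) • (φ q - φ p) := by rw [hcdef]; simp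
    have h3 : ‖φ p‖ ≤ ‖c j‖ + ‖((j:ℝ)/(n:ℝ)) • (φ q - φ p)‖ := by
      conv_lhs => rw [h2]
      exact norm_sub_le _ _
    have h4 : ‖((j:ℝ)/(n:ℝ)) • (φ q - φ p)‖ ≤ ‖φ q - φ p‖ := by
      rw [norm_smul, Real.norm_eq_abs, abs_of_nonneg (by positivity)]
      have h7 : (j:ℝ)/(n:ℝ) ≤ 1 := by
        rw [div_le_one hnpos]; exact_mod_cast hj
      nlinarith [norm_nonneg (φ q - φ p)]
    have h5 : ‖φ q - φ p‖ = ‖φ p - φ q‖ := norm_sub_rev _ _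
    have h8 : ‖φ p‖ ≤ R2 + ‖φ p - φ q‖ := by linarith
    have h9 : ‖φ p‖ ≤ R2 + l * (2*t) := by linarith
    exact absurd (hpa.trans h9) (not_le.mpr hkey)
  -- choose preimages along the chain
  have hex : ∀ j : ℕ, ∃ w : ℂ × ℂ, j ≤ n →
      (w ∈ {p : ℂ × ℂ | p.2 = p.1 ^ 2} \ K ∧ φ w = c j) := by
    intro j
    by_cases hj : j ≤ n
    · obtain ⟨w, hw1, hw2⟩ := hbij.surjOn (hcnorm j hj)
      exact ⟨w, fun _ => ⟨hw1, hw2⟩⟩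
    · exact ⟨p, fun h => absurd h hj⟩
  choose w hw using hex
  have hw0 : w 0 = p :=
    hbij.injOn (hw 0 (Nat.zero_le n)).1 hp (by rw [(hw 0 (Nat.zero_le n)).2, hc0])
  have hwn : w n = q :=
    hbij.injOn (hw n le_rfl).1 hq (by rw [(hw n le_rfl).2, hcn])
  -- step bound for the pulled-back chain
  have hstepw : ∀ j, j < n → ‖w (j+1) - w j‖ ≤ t/4 := by
    intro j hj
    have hj1 : j + 1 ≤ n := hj
    have h1 := (hlip (w (j+1)) (hw (j+1) hj1).1 (w j) (hw j (le_of_lt hj)).1).1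
    rw [(hw (j+1) hj1).2, (hw j (le_of_lt hj)).2, hcstepnorm j] at h1
    have h3 : ‖w (j+1) - w j‖ ≤ l * (‖φ q - φ p‖ / (n:ℝ)) := by
      have h4 := mul_le_mul_of_nonneg_left h1 hl0.le
      rwa [← mul_assoc, mul_inv_cancel₀ hl0.ne', one_mul] at h4
    have h6 : ‖φ q - φ p‖ ≤ l*(2*t) := by rw [norm_sub_rev]; exact hab
    have h5 : l * (‖φ q - φ p‖ / (n:ℝ)) ≤ t/4 := by
      calc l * (‖φ q - φ p‖ / (n:ℝ)) ≤ l * ((l*(2*t)) / (8*l^2)) := by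
            gcongr
      _ = t/4 := by field_simp; ring
    exact le_trans h3 h5
  -- apply the chain lemma
  have hx0 : (w 0).1 = (t:ℂ) := by rw [hw0, hpdef]
  have hxn : (w n).1 = -(t:ℂ) := by rw [hwn, hqdef]
  have hchain := parabola_chain t ht1 n (fun j => (w j).1) hx0 hxn ?_
  · -- total variation bound gives the contradiction
    have hsum : ∑ j ∈ Finset.range n,
        ‖(w (j+1)).1 ^ 2 - (w j).1 ^ 2‖ ≤ (n:ℝ) * (t/4) := by
      have hbnd : ∀ j ∈ Finset.range n,
          ‖(w (j+1)).1 ^ 2 - (w j).1 ^ 2‖ ≤ t/4 := by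
        intro j hj
        rw [Finset.mem_range] at hj
        have hm1 : (w (j+1)).2 = (w (j+1)).1 ^ 2 := (hw (j+1) hj).1.1
        have hm0 : (w j).2 = (w j).1 ^ 2 := (hw j (le_of_lt hj)).1.1
        calc ‖(w (j+1)).1 ^ 2 - (w j).1 ^ 2‖
            = ‖(w (j+1) - w j).2‖ := by
              rw [Prod.snd_sub, hm1, hm0]
          _ ≤ ‖w (j+1) - w j‖ := norm_snd_le _
          _ ≤ t/4 := hstepw j hj
      calc ∑ j ∈ Finset.range n, ‖(w (j+1)).1 ^ 2 - (w j).1 ^ 2‖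
          ≤ ∑ _j ∈ Finset.range n, (t/4) := Finset.sum_le_sum hbnd
        _ = (n:ℝ) * (t/4) := by
            rw [Finset.sum_const, Finset.card_range, nsmul_eq_mul]
    have hfin : t^2 ≤ (n:ℝ) * (t/4) := le_trans hchain hsum
    have hlt : (n:ℝ)*(t/4) < (8*l^2+1)*(t/4) :=
      mul_lt_mul_of_pos_right hnlt (by linarith)
    nlinarith [mul_pos (mul_pos hl0 hl0) ht0,
      mul_le_mul_of_nonneg_right htl ht0.le]
  · -- step bound in the first coordinate
    intro j hj
    calc ‖(w (j+1)).1 - (w j).1‖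
        = ‖(w (j+1) - w j).1‖ := by rw [Prod.fst_sub]
      _ ≤ ‖w (j+1) - w j‖ := norm_fst_le _
      _ ≤ t/4 := hstepw j hj
      _ ≤ t/2 := by linarith
end

section
/- The set X = {(x₁, …, xₙ, x_{n+1}) ∈ ℝ^{n+1} : x₁² + ⋯ + xₙ² = x_{n+1}³}, for n ≥ 1, is Lipschitz regular at infinity: the projection π(x₁,…,xₙ,x_{n+1}) = (x₁,…,xₙ) restricts to a bi-Lipschitz homeomorphism from X \ K onto ℝⁿ \ K' for suitable compact sets K, K'. -/
/-- The projection forgetting the last coordinate. -/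
def projE (n : ℕ) (x : EuclideanSpace ℝ (Fin (n + 1))) : EuclideanSpace ℝ (Fin n) :=
  WithLp.toLp 2 (fun i => x (Fin.castSucc i))

lemma cube_one_le {s a : ℝ} (ha : 1 ≤ a) (hs : s ^ 3 = a ^ 2) : 1 ≤ s := by
  nlinarith [sq_nonneg (s - 1), sq_nonneg (s + 1), sq_nonneg s]

lemma cube_sq_ge {s a : ℝ} (ha : 1 ≤ a) (hs : s ^ 3 = a ^ 2) : a ≤ s ^ 2 := by
  have h1 : 1 ≤ s := cube_one_le ha hs
  nlinarith [sq_nonneg (s^2 - a)]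

lemma cube_lip_le {s t a b : ℝ} (ha : 1 ≤ a) (hb : 1 ≤ b)
    (hs : s ^ 3 = a ^ 2) (ht : t ^ 3 = b ^ 2) (h : t ≤ s) : s - t ≤ a - b := by
  have hs1 : 1 ≤ s := cube_one_le ha hs
  have ht1 : 1 ≤ t := cube_one_le hb ht
  have hsa : a ≤ s ^ 2 := cube_sq_ge ha hs
  have htb : b ≤ t ^ 2 := cube_sq_ge hb ht
  have hab : b ≤ a := by
    nlinarith [mul_nonneg (sub_nonneg.2 h) (by nlinarith : (0:ℝ) ≤ s^2 + s*t + t^2),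
      sq_nonneg (a - b), sq_nonneg (a + b)]
  nlinarith [mul_nonneg (sub_nonneg.2 h) (by nlinarith : (0:ℝ) ≤ s^2 + s*t + t^2 - (a + b))]

lemma cube_lip {s t a b : ℝ} (ha : 1 ≤ a) (hb : 1 ≤ b)
    (hs : s ^ 3 = a ^ 2) (ht : t ^ 3 = b ^ 2) : |s - t| ≤ |a - b| := by
  rcases le_total t s with h | h
  · have h1 := cube_lip_le ha hb hs ht h
    have hab : b ≤ a := by
      have hs1 := cube_one_le ha hs; have ht1 := cube_one_le hb ht
      nlinarith [mul_nonneg (sub_nonneg.2 h) (by nlinarith : (0:ℝ) ≤ s^2 + s*t + t^2),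
        sq_nonneg (a - b), sq_nonneg (a + b)]
    rw [abs_of_nonneg (by linarith), abs_of_nonneg (by linarith)]; exact h1
  · have h1 := cube_lip_le hb ha ht hs h
    have hab : a ≤ b := by
      have hs1 := cube_one_le ha hs; have ht1 := cube_one_le hb ht
      nlinarith [mul_nonneg (sub_nonneg.2 h) (by nlinarith : (0:ℝ) ≤ t^2 + s*t + s^2),
        sq_nonneg (a - b), sq_nonneg (a + b)]
    rw [abs_of_nonpos (by linarith), abs_of_nonpos (by linarith)]; linarith

lemma normsq_eq {m : ℕ} (y : EuclideanSpace ℝ (Fin m)) : ‖y‖^2 = ∑ i, y i ^ 2 := by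
  rw [EuclideanSpace.norm_eq, Real.sq_sqrt (by positivity)]
  simp [sq_abs]

lemma norm_split (n : ℕ) (v : EuclideanSpace ℝ (Fin (n+1))) :
    ‖v‖^2 = ‖projE n v‖^2 + v (Fin.last n) ^ 2 := by
  rw [normsq_eq, normsq_eq, Fin.sum_univ_castSucc]
  rfl

/-- The hypersurface `x₁² + ⋯ + xₙ² = x_{n+1}³` in `ℝ^{n+1}` is Lipschitz regular at
infinity: the projection to the first `n` coordinates restricts to a bi-Lipschitz
homeomorphism from `X \ K` onto `ℝⁿ \ K'` for suitable compact sets `K, K'`. -/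
theorem cusp_hypersurface_lipschitz_regular_at_infty (n : ℕ) (hn : 1 ≤ n)
    (X : Set (EuclideanSpace ℝ (Fin (n + 1))))
    (hX : X = {x : EuclideanSpace ℝ (Fin (n + 1)) |
      ∑ i : Fin n, x (Fin.castSucc i) ^ 2 = x (Fin.last n) ^ 3}) :
    ∃ (K : Set (EuclideanSpace ℝ (Fin (n + 1)))) (K' : Set (EuclideanSpace ℝ (Fin n))),
      IsCompact K ∧ IsCompact K' ∧
      Set.BijOn (projE n) (X \ K) (Set.univ \ K') ∧
      ∃ l : ℝ, 1 ≤ l ∧ ∀ p ∈ X \ K, ∀ q ∈ X \ K,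
        l⁻¹ * ‖p - q‖ ≤ ‖projE n p - projE n q‖ ∧ ‖projE n p - projE n q‖ ≤ l * ‖p - q‖ := by
  set K : Set (EuclideanSpace ℝ (Fin (n + 1))) := X ∩ {x | ‖projE n x‖ ≤ 1} with hK
  set K' : Set (EuclideanSpace ℝ (Fin n)) := Metric.closedBall 0 1 with hK'
  -- key fact on X
  have hkey : ∀ x ∈ X, x (Fin.last n) ^ 3 = ‖projE n x‖ ^ 2 := by
    intro x hx
    rw [hX] at hx
    rw [normsq_eq]
    rw [← hx]
    rfl
  have hXK : ∀ x, x ∈ X \ K ↔ x ∈ X ∧ 1 < ‖projE n x‖ := by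
    intro x
    constructor
    · rintro ⟨hx, hk⟩
      exact ⟨hx, lt_of_not_ge fun h => hk ⟨hx, h⟩⟩
    · rintro ⟨hx, h⟩
      exact ⟨hx, fun hk => absurd hk.2 (not_le.2 h)⟩
  -- compactness
  have hXclosed : IsClosed X := by
    rw [hX]
    have hcont : ∀ j : Fin (n+1),
        Continuous fun x : EuclideanSpace ℝ (Fin (n+1)) => x j :=
      fun j => PiLp.continuous_apply 2 _ j
    exact isClosed_eq
      (continuous_finset_sum _ fun i _ => (hcont (Fin.castSucc i)).pow 2)
      ((hcont (Fin.last n)).pow 3)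
  have hprojcont : Continuous (projE n) :=
    (PiLp.continuous_toLp 2 _).comp (continuous_pi fun i => PiLp.continuous_apply 2 _ _)
  have hKclosed : IsClosed K :=
    hXclosed.inter (isClosed_le hprojcont.norm continuous_const)
  have hKsub : K ⊆ Metric.closedBall 0 2 := by
    rintro x ⟨hx, h1⟩
    have h3 := hkey x hx
    have ha0 : (0:ℝ) ≤ ‖projE n x‖ := norm_nonneg _
    have ha1 : ‖projE n x‖ ≤ 1 := h1
    have hl0 : 0 ≤ x (Fin.last n) := by
      by_contra hneg
      push_neg at hneg
      have hpos : 0 < (-(x (Fin.last n))) ^ 3 := pow_pos (by linarith) 3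
      nlinarith [sq_nonneg ‖projE n x‖]
    have hl1 : x (Fin.last n) ≤ 1 := by
      nlinarith [sq_nonneg (x (Fin.last n) - 1), sq_nonneg (x (Fin.last n) + 1)]
    have hsq : ‖x‖ ^ 2 ≤ 4 := by
      rw [norm_split n x]
      nlinarith
    have : ‖x‖ ≤ 2 := by nlinarith [norm_nonneg x]
    simpa [Metric.mem_closedBall, dist_zero_right] using this
  have hKcomp : IsCompact K :=
    (isCompact_closedBall (0 : EuclideanSpace ℝ (Fin (n+1))) 2).of_isClosed_subset
      hKclosed hKsub
  refine ⟨K, K', hKcomp, isCompact_closedBall 0 1, ⟨?_, ?_, ?_⟩, 2, by norm_num, ?_⟩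
  · -- MapsTo
    intro x hx
    obtain ⟨hxX, hx1⟩ := (hXK x).1 hx
    refine ⟨Set.mem_univ _, ?_⟩
    simp only [hK', Metric.mem_closedBall, dist_zero_right]
    exact not_le.2 hx1
  · -- InjOn
    intro p hp q hq hpq
    obtain ⟨hpX, hp1⟩ := (hXK p).1 hp
    obtain ⟨hqX, hq1⟩ := (hXK q).1 hq
    have ha : p (Fin.last n) ^ 3 = ‖projE n p‖ ^ 2 := hkey p hpX
    have hb : q (Fin.last n) ^ 3 = ‖projE n q‖ ^ 2 := hkey q hqX
    have hnorm : ‖projE n p‖ = ‖projE n q‖ := by rw [hpq]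
    have hb' : q (Fin.last n) ^ 3 = ‖projE n p‖ ^ 2 := by rw [hnorm]; exact hb
    have habs := cube_lip hp1.le hp1.le ha hb'
    have hlast : p (Fin.last n) = q (Fin.last n) := by
      have h0 : |p (Fin.last n) - q (Fin.last n)| ≤ 0 := by simpa using habs
      have h1 := abs_nonneg (p (Fin.last n) - q (Fin.last n))
      have h2 : p (Fin.last n) - q (Fin.last n) = 0 := abs_eq_zero.mp (le_antisymm h0 h1)
      linarith
    ext i
    induction i using Fin.lastCases with
    | last => exact hlast
    | cast i => exact congrArg (fun z => z i) hpq
  · -- SurjOn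
    intro y hy
    have hy1 : 1 < ‖y‖ := by
      have := hy.2
      simp only [hK', Metric.mem_closedBall, dist_zero_right, not_le] at this
      exact this
    set t : ℝ := (‖y‖ ^ 2) ^ ((3:ℝ)⁻¹) with hdef
    have ht : t ^ 3 = ‖y‖ ^ 2 := by
      rw [hdef, ← Real.rpow_natCast ((‖y‖ ^ 2) ^ ((3:ℝ)⁻¹)) 3,
        ← Real.rpow_mul (by positivity)]
      norm_num
    set x : EuclideanSpace ℝ (Fin (n+1)) :=
      WithLp.toLp 2 (Fin.snoc (fun i => y i) t : Fin (n+1) → ℝ) with hxdef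
    have hproj : projE n x = y := by
      ext i
      show x (Fin.castSucc i) = y i
      rw [hxdef]
      exact Fin.snoc_castSucc (α := fun _ => ℝ) t (fun i => y i) i
    have hxX : x ∈ X := by
      rw [hX]
      show ∑ i : Fin n, x (Fin.castSucc i) ^ 2 = x (Fin.last n) ^ 3
      have h1 : ∀ i : Fin n, x (Fin.castSucc i) = y i := fun i => by
        rw [hxdef]; exact Fin.snoc_castSucc (α := fun _ => ℝ) t (fun i => y i) i
      have h2 : x (Fin.last n) = t := by rw [hxdef]; exact Fin.snoc_last (α := fun _ => ℝ) t (fun i => y i)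
      simp only [h1, h2, ht]
      rw [← normsq_eq]
    refine ⟨x, ⟨hxX, ?_⟩, hproj⟩
    intro hk
    have := hk.2
    rw [Set.mem_setOf_eq, hproj] at this
    exact absurd this (not_le.2 hy1)
  · -- Lipschitz estimates
    intro p hp q hq
    obtain ⟨hpX, hp1⟩ := (hXK p).1 hp
    obtain ⟨hqX, hq1⟩ := (hXK q).1 hq
    have ha : p (Fin.last n) ^ 3 = ‖projE n p‖ ^ 2 := hkey p hpX
    have hb : q (Fin.last n) ^ 3 = ‖projE n q‖ ^ 2 := hkey q hqX
    have hd : ‖p - q‖ ^ 2 = ‖projE n p - projE n q‖ ^ 2 +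
        (p (Fin.last n) - q (Fin.last n)) ^ 2 := by
      have h0 := norm_split n (p - q)
      have e1 : projE n (p - q) = projE n p - projE n q := by
        ext i; simp [projE]
      have e2 : (p - q) (Fin.last n) = p (Fin.last n) - q (Fin.last n) := by simp
      rw [e1, e2] at h0
      exact h0
    have habs : |p (Fin.last n) - q (Fin.last n)| ≤ |‖projE n p‖ - ‖projE n q‖| :=
      cube_lip hp1.le hq1.le ha hb
    have htri : |‖projE n p‖ - ‖projE n q‖| ≤ ‖projE n p - projE n q‖ :=
      abs_norm_sub_norm_le _ _
    have hZ : |p (Fin.last n) - q (Fin.last n)| ≤ ‖projE n p - projE n q‖ :=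
      habs.trans htri
    have hsq1 : (p (Fin.last n) - q (Fin.last n)) ^ 2 ≤ ‖projE n p - projE n q‖ ^ 2 := by
      nlinarith [abs_nonneg (p (Fin.last n) - q (Fin.last n)), sq_abs
        (p (Fin.last n) - q (Fin.last n)), norm_nonneg (projE n p - projE n q)]
    constructor
    · -- lower bound
      have h2 : ‖p - q‖ ^ 2 ≤ (2 * ‖projE n p - projE n q‖) ^ 2 := by
        rw [hd]
        nlinarith [norm_nonneg (projE n p - projE n q)]
      have h3 : ‖p - q‖ ≤ 2 * ‖projE n p - projE n q‖ := by
        nlinarith [norm_nonneg (p - q), norm_nonneg (projE n p - projE n q)]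
      rw [show ((2:ℝ))⁻¹ * ‖p - q‖ = ‖p - q‖ / 2 by ring]
      linarith
    · -- upper bound
      have h1 : ‖projE n p - projE n q‖ ^ 2 ≤ ‖p - q‖ ^ 2 := by
        rw [hd]
        nlinarith [sq_nonneg (p (Fin.last n) - q (Fin.last n))]
      have h3 : ‖projE n p - projE n q‖ ≤ ‖p - q‖ := by
        nlinarith [norm_nonneg (p - q), norm_nonneg (projE n p - projE n q)]
      nlinarith [norm_nonneg (p - q)]
end
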